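/- If a partition tree for strings X, Y of length n has depth D and ED(X, Y) ≤ k, then the number of nodes v of the tree that are not matched — i.e., for which there is no shift s* ∈ [−k, k] with X_v = Y[i+s* .. j+s*) where v spans leaves i through j−1 — is at most k·D. -/

import Mathlib

/-- Cost structure for Levenshtein edit distance (as in the former Mathlib `Levenshtein.Cost`). -/
structure Levenshtein.Cost (α β δ : Type*) where
  /-- Cost to delete an element from a list. -/
  delete : α → δ
  /-- Cost in insert an element into a list. -/
  insert : β → δ
  /-- Cost to substitute one element for another in a list. -/
  substitute : α → β → δ

/-- The default cost structure, for which all operations cost `1`. -/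
@[simps]
def Levenshtein.defaultCost {α : Type*} [DecidableEq α] : Levenshtein.Cost α α ℕ where
  delete _ := 1
  insert _ := 1
  substitute a b := if a = b then 0 else 1

/-- (Implementation detail for `levenshtein`, as in former Mathlib.) -/
def Levenshtein.impl {α β δ : Type*} [AddZeroClass δ] [Min δ] (C : Levenshtein.Cost α β δ)
    (xs : List α) (y : β) (d : {r : List δ // 0 < r.length}) : {r : List δ // 0 < r.length} :=
  let ⟨ds, w⟩ := d
  xs.zip (ds.zip ds.tail) |>.foldr
    (init := ⟨[C.insert y + ds.getLast (List.length_pos_iff.mp w)], by simp⟩)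
    (fun ⟨x, d₀, d₁⟩ ⟨r, w⟩ =>
      ⟨min (C.delete x + r[0]) (min (C.insert y + d₀) (C.substitute x y + d₁)) :: r, by simp⟩)

/-- `suffixLevenshtein C xs ys` computes the Levenshtein distance from each suffix of `xs`
to `ys` (as in former Mathlib). -/
def suffixLevenshtein {α β δ : Type*} [AddZeroClass δ] [Min δ] (C : Levenshtein.Cost α β δ)
    (xs : List α) (ys : List β) : {r : List δ // 0 < r.length} :=
  ys.foldr
    (Levenshtein.impl C xs)
    (xs.foldr (init := ⟨[0], by simp⟩) (fun a ⟨r, w⟩ => ⟨(C.delete a + r[0]) :: r, by simp⟩))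

/-- The Levenshtein distance between two lists (as in former Mathlib). -/
def levenshtein {α β δ : Type*} [AddZeroClass δ] [Min δ] (C : Levenshtein.Cost α β δ)
    (xs : List α) (ys : List β) : δ :=
  let ⟨r, w⟩ := suffixLevenshtein C xs ys
  r[0]

/-- Levenshtein edit distance between two lists (unit costs). -/
def ED {α : Type*} [DecidableEq α] (X Y : List α) : ℕ :=
  levenshtein Levenshtein.defaultCost X Y

/-- The fragment `X[a..b)` (with out-of-range indices clamped). -/
def strSlice {α : Type*} (X : List α) (a b : ℕ) : List α := (X.drop a).take (b - a)

/-- The fragment `Y[a..b)` for integer indices (clamped to the valid range). -/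
def strSliceZ {α : Type*} (Y : List α) (a b : ℤ) : List α :=
  (Y.drop a.toNat).take (b.toNat - a.toNat)

/-- A (node of a) partition tree: a leaf spans one position, an internal node records
the interval of leaves it spans and its list of children. -/
inductive PTree where
  | leaf (i : ℕ) : PTree
  | node (lo hi : ℕ) (children : List PTree) : PTree

mutual
/-- Well-formedness: the tree `t` spans exactly the interval `[lo, hi)` of leaves and
the children of each node span consecutive subintervals. -/
inductive PTree.WF : PTree → ℕ → ℕ → Prop where
  | leaf (i : ℕ) : PTree.WF (.leaf i) i (i + 1)
  | node (lo hi : ℕ) (cs : List PTree) (hne : cs ≠ []) (h : PTree.WFs cs lo hi) :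
      PTree.WF (.node lo hi cs) lo hi
/-- A list of trees spans consecutive intervals covering `[a, c)`. -/
inductive PTree.WFs : List PTree → ℕ → ℕ → Prop where
  | nil (a : ℕ) : PTree.WFs [] a a
  | cons (t : PTree) (ts : List PTree) (a b c : ℕ) :
      PTree.WF t a b → PTree.WFs ts b c → PTree.WFs (t :: ts) a c
end

/-- The height of a partition tree: maximum distance from the root to a leaf. -/
def PTree.height : PTree → ℕ
  | .leaf _ => 0
  | .node _ _ cs => (cs.attach.map (fun c => PTree.height c.1)).foldr max 0 + 1
termination_by t => sizeOf t
decreasing_by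
  have := List.sizeOf_lt_of_mem c.2
  simp only [PTree.node.sizeOf_spec]
  omega

/-- A node spanning `[lo, hi)` is matched if some shift `s* ∈ [−k, k]` gives an exact
match `X[lo..hi) = Y[lo+s*..hi+s*)`. -/
def Matched {α : Type*} (X Y : List α) (k : ℕ) (lo hi : ℕ) : Prop :=
  ∃ s : ℤ, -(k : ℤ) ≤ s ∧ s ≤ k ∧
    strSlice X lo hi = strSliceZ Y ((lo : ℤ) + s) ((hi : ℤ) + s)

open Classical in
/-- The number of unmatched nodes of a partition tree. -/
noncomputable def countUnmatched {α : Type*} (X Y : List α) (k : ℕ) : PTree → ℕ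
  | .leaf i => if Matched X Y k i (i + 1) then 0 else 1
  | .node lo hi cs =>
      (if Matched X Y k lo hi then 0 else 1) +
        (cs.attach.map (fun c => countUnmatched X Y k c.1)).sum
termination_by t => sizeOf t
decreasing_by
  have := List.sizeOf_lt_of_mem c.2
  simp only [PTree.node.sizeOf_spec]
  omega

section LevLemmas
variable {α β δ : Type*} [AddZeroClass δ] [Min δ] (C : Levenshtein.Cost α β δ)

theorem lev_impl_cons (x : α) (xs : List α) (y : β) (d0 d1 : δ) (rest : List δ)
    {h : 0 < (d0 :: d1 :: rest).length} {h' : 0 < (d1 :: rest).length} :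
    (Levenshtein.impl C (x :: xs) y ⟨d0 :: d1 :: rest, h⟩).1 =
      min (C.delete x + (Levenshtein.impl C xs y ⟨d1 :: rest, h'⟩).1[0]'(Levenshtein.impl C xs y ⟨d1 :: rest, h'⟩).2)
        (min (C.insert y + d0) (C.substitute x y + d1)) :: (Levenshtein.impl C xs y ⟨d1 :: rest, h'⟩).1 := rfl

theorem lev_impl_length (xs : List α) (y : β) : ∀ (d : {r : List δ // 0 < r.length}),
    d.1.length = xs.length + 1 → (Levenshtein.impl C xs y d).1.length = xs.length + 1 := by
  induction xs with
  | nil => intro d _; rfl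
  | cons x xs ih =>
    intro d hd
    obtain ⟨ds, w⟩ := d
    match ds, w, hd with
    | d0 :: d1 :: rest, w, hd =>
      rw [lev_impl_cons C x xs y d0 d1 rest (h' := by simp)]
      simp only [List.length_cons]
      rw [ih ⟨d1 :: rest, by simp⟩ (by simpa using hd)]

theorem suffixLev_cons_nil (x : α) (xs : List α) :
    (suffixLevenshtein C (x :: xs) []).1 =
      (C.delete x + (suffixLevenshtein C xs []).1[0]'(suffixLevenshtein C xs []).2) ::
        (suffixLevenshtein C xs []).1 := rfl

theorem suffixLev_length (xs : List α) (ys : List β) :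
    (suffixLevenshtein C xs ys).1.length = xs.length + 1 := by
  induction ys with
  | nil =>
    induction xs with
    | nil => rfl
    | cons x xs ih => rw [suffixLev_cons_nil, List.length_cons, ih, List.length_cons]
  | cons y ys ih => exact lev_impl_length C xs y _ ih

theorem suffixLev_cons (x : α) (xs : List α) (ys : List β) :
    ∃ d, (suffixLevenshtein C (x :: xs) ys).1 = d :: (suffixLevenshtein C xs ys).1 := by
  induction ys with
  | nil => exact ⟨_, suffixLev_cons_nil C x xs⟩
  | cons y ys ih =>
    obtain ⟨d, hd⟩ := ih
    have hl := suffixLev_length C xs ys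
    have e1 : suffixLevenshtein C (x :: xs) (y :: ys) =
        Levenshtein.impl C (x :: xs) y (suffixLevenshtein C (x :: xs) ys) := rfl
    have e2 : suffixLevenshtein C xs (y :: ys) =
        Levenshtein.impl C xs y (suffixLevenshtein C xs ys) := rfl
    rw [e1, e2]
    generalize suffixLevenshtein C xs ys = S at hd hl ⊢
    obtain ⟨S, wS⟩ := S
    dsimp only at hd hl
    match S, wS, hd with
    | d1 :: rest, wS, hd =>
      have e3 : suffixLevenshtein C (x :: xs) ys = ⟨d :: d1 :: rest, by simp⟩ := Subtype.ext hd
      rw [e3, lev_impl_cons C x xs y d d1 rest (h' := wS)]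
      exact ⟨_, rfl⟩

theorem lev_eq (xs : List α) (ys : List β) :
    levenshtein C xs ys = (suffixLevenshtein C xs ys).1[0]'(suffixLevenshtein C xs ys).2 := rfl

theorem suffixLev_head (xs : List α) (ys : List β) :
    ∃ rest, (suffixLevenshtein C xs ys).1 = levenshtein C xs ys :: rest := by
  rw [lev_eq]
  generalize suffixLevenshtein C xs ys = S
  obtain ⟨S, w⟩ := S
  match S, w with
  | d :: rest, _ => exact ⟨rest, rfl⟩

theorem suffixLev_cons' (x : α) (xs : List α) (ys : List β) :
    (suffixLevenshtein C (x :: xs) ys).1 =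
      levenshtein C (x :: xs) ys :: (suffixLevenshtein C xs ys).1 := by
  obtain ⟨d, hd⟩ := suffixLev_cons C x xs ys
  simp only [lev_eq, hd, List.getElem_cons_zero]

@[simp] theorem levenshtein_nil_nil : levenshtein C [] [] = 0 := rfl

@[simp] theorem levenshtein_cons_nil (x : α) (xs : List α) :
    levenshtein C (x :: xs) [] = C.delete x + levenshtein C xs [] := rfl

@[simp] theorem levenshtein_nil_cons (y : β) (ys : List β) :
    levenshtein C [] (y :: ys) = C.insert y + levenshtein C [] ys := by
  have e : suffixLevenshtein C [] (y :: ys) =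
      Levenshtein.impl C [] y (suffixLevenshtein C [] ys) := rfl
  obtain ⟨rest, hr⟩ := suffixLev_head C ([] : List α) ys
  have hl := suffixLev_length C ([] : List α) ys
  rw [hr] at hl
  have hrest : rest = [] := by simpa using hl
  subst hrest
  have e4 : suffixLevenshtein C [] ys = ⟨[levenshtein C [] ys], by simp⟩ := Subtype.ext hr
  rw [lev_eq C [] (y :: ys)]
  simp only [e, e4]
  rfl

theorem levenshtein_cons_cons (x : α) (xs : List α) (y : β) (ys : List β) :
    levenshtein C (x :: xs) (y :: ys) =
      min (C.delete x + levenshtein C xs (y :: ys))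
        (min (C.insert y + levenshtein C (x :: xs) ys)
          (C.substitute x y + levenshtein C xs ys)) := by
  obtain ⟨rest, hr⟩ := suffixLev_head C xs ys
  have h1 := suffixLev_cons' C x xs ys
  rw [hr] at h1
  have e3 : suffixLevenshtein C (x :: xs) ys =
      ⟨levenshtein C (x :: xs) ys :: levenshtein C xs ys :: rest, by simp⟩ := Subtype.ext h1
  have e4 : suffixLevenshtein C xs ys = ⟨levenshtein C xs ys :: rest, by simp⟩ := Subtype.ext hr
  have e : suffixLevenshtein C (x :: xs) (y :: ys) =
      Levenshtein.impl C (x :: xs) y (suffixLevenshtein C (x :: xs) ys) := rfl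
  have e' : suffixLevenshtein C xs (y :: ys) =
      Levenshtein.impl C xs y (suffixLevenshtein C xs ys) := rfl
  rw [lev_eq C (x :: xs) (y :: ys), lev_eq C xs (y :: ys)]
  simp only [e, e', e3, e4, lev_impl_cons, List.getElem_cons_zero]
  rfl

end LevLemmas

section EDlemmas
variable {α : Type*} [DecidableEq α]

lemma ED_nil_left (Y : List α) : ED [] Y = Y.length := by
  induction Y with
  | nil => simp [ED]
  | cons y ys ih => simp [ED] at ih ⊢; omega

lemma ED_nil_right (X : List α) : ED X [] = X.length := by
  induction X with
  | nil => simp [ED]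
  | cons x xs ih => simp [ED] at ih ⊢; omega

lemma ED_rec (x y : α) (xs ys : List α) :
    ED (x::xs) (y::ys) = min (1 + ED xs (y::ys))
      (min (1 + ED (x::xs) ys) ((if x = y then 0 else 1) + ED xs ys)) := by
  simp [ED, levenshtein_cons_cons]

lemma ED_del (x : α) (xs Y : List α) : ED (x::xs) Y ≤ 1 + ED xs Y := by
  cases Y with
  | nil => simp [ED_nil_right]
  | cons y ys => rw [ED_rec]; omega

lemma ED_ins (X : List α) (y : α) (ys : List α) : ED X (y::ys) ≤ 1 + ED X ys := by
  cases X with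
  | nil => simp [ED_nil_left]
  | cons x xs => rw [ED_rec]; omega

lemma ED_subc (x y : α) (xs ys : List α) :
    ED (x::xs) (y::ys) ≤ (if x = y then 0 else 1) + ED xs ys := by
  rw [ED_rec]; omega

lemma ED_len1 (X : List α) : ∀ Y : List α, X.length ≤ ED X Y + Y.length := by
  induction X with
  | nil => simp
  | cons x xs ihX =>
    intro Y
    induction Y with
    | nil => simp [ED_nil_right]
    | cons y ys ihY =>
      have h1 := ihX (y::ys)
      have h2 := ihX ys
      have hrec := ED_rec x y xs ys
      simp only [List.length_cons] at *
      omega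

lemma ED_len2 (X : List α) : ∀ Y : List α, Y.length ≤ ED X Y + X.length := by
  induction X with
  | nil => intro Y; simp [ED_nil_left]
  | cons x xs ihX =>
    intro Y
    induction Y with
    | nil => simp
    | cons y ys ihY =>
      have h1 := ihX (y::ys)
      have h2 := ihX ys
      have hrec := ED_rec x y xs ys
      simp only [List.length_cons] at *
      omega

lemma ED_eq_zero {X : List α} : ∀ {Y : List α}, ED X Y = 0 → X = Y := by
  induction X with
  | nil =>
    intro Y h
    cases Y with
    | nil => rfl
    | cons y ys => rw [ED_nil_left] at h; simp at h
  | cons x xs ih =>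
    intro Y h
    cases Y with
    | nil => rw [ED_nil_right] at h; simp at h
    | cons y ys =>
      rw [ED_rec] at h
      have hxy : x = y := by
        by_cases hc : x = y
        · exact hc
        · exfalso; simp only [if_neg hc] at h; omega
      have h0 : ED xs ys = 0 := by simp only [if_pos hxy] at h; omega
      rw [hxy, ih h0]

lemma ED_split (X1 : List α) : ∀ (X2 Y : List α), ∃ Y1 Y2 : List α,
    Y1 ++ Y2 = Y ∧ ED X1 Y1 + ED X2 Y2 ≤ ED (X1 ++ X2) Y := by
  induction X1 with
  | nil => intro X2 Y; exact ⟨[], Y, rfl, by simp [ED]⟩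
  | cons x xs ihX =>
    intro X2 Y
    induction Y with
    | nil =>
      refine ⟨[], [], rfl, ?_⟩
      simp [ED_nil_right]; omega
    | cons y ys ihY =>
      have hrec : ED ((x::xs) ++ X2) (y::ys) = min (1 + ED (xs++X2) (y::ys))
          (min (1 + ED ((x::xs)++X2) ys) ((if x = y then 0 else 1) + ED (xs++X2) ys)) := by
        rw [List.cons_append, ED_rec, ← List.cons_append]
      have hcase : ED ((x::xs) ++ X2) (y::ys) = 1 + ED (xs++X2) (y::ys)
          ∨ ED ((x::xs) ++ X2) (y::ys) = 1 + ED ((x::xs)++X2) ys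
          ∨ ED ((x::xs) ++ X2) (y::ys) = (if x = y then 0 else 1) + ED (xs++X2) ys := by
        omega
      rcases hcase with hc | hc | hc
      · obtain ⟨Y1, Y2, hY, hle⟩ := ihX X2 (y::ys)
        refine ⟨Y1, Y2, hY, ?_⟩
        have := ED_del x xs Y1
        omega
      · obtain ⟨Y1, Y2, hY, hle⟩ := ihY
        refine ⟨y::Y1, Y2, by simp [hY], ?_⟩
        have := ED_ins (x::xs) y Y1
        omega
      · obtain ⟨Y1, Y2, hY, hle⟩ := ihX X2 ys
        refine ⟨y::Y1, Y2, by simp [hY], ?_⟩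
        have := ED_subc x y xs Y1
        omega

end EDlemmas

section Slices
variable {α : Type*}

lemma strSlice_length (X : List α) {a b : ℕ} (hb : b ≤ X.length) :
    (strSlice X a b).length = b - a := by
  simp [strSlice]; omega

lemma strSlice_append (X : List α) {a b c : ℕ} (hab : a ≤ b) (hbc : b ≤ c) :
    strSlice X a c = strSlice X a b ++ strSlice X b c := by
  unfold strSlice
  have h1 : c - a = (b - a) + (c - b) := by omega
  rw [h1, List.take_add, List.drop_drop]
  have h2 : a + (b - a) = b := by omega
  rw [h2]

end Slices

section WFfacts

lemma wf_lt_aux : ∀ (N : ℕ) (t : PTree) (a b : ℕ), sizeOf t ≤ N → PTree.WF t a b → a < b := by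
  intro N
  induction N using Nat.strong_induction_on with
  | _ N IH =>
    intro t a b hs hwf
    have hforest : ∀ (ts : List PTree), (∀ u ∈ ts, sizeOf u < N) →
        ∀ a c, PTree.WFs ts a c → a ≤ c := by
      intro ts
      induction ts with
      | nil => intro _ a c h; cases h; omega
      | cons u us ihu =>
        intro hmem a c h
        cases h with
        | cons _ _ _ b _ hu hus =>
          have h1 : a < b := IH (sizeOf u) (hmem u (by simp)) u a b le_rfl hu
          have h2 : b ≤ c := ihu (fun v hv => hmem v (by simp [hv])) b c hus
          omega
    cases t with
    | leaf i => cases hwf; omega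
    | node lo hi cs =>
     cases hwf with
     | node _ _ _ hne h =>
      cases cs with
      | nil => exact absurd rfl hne
      | cons t0 ts =>
        have hsz : ∀ u ∈ t0 :: ts, sizeOf u < N := by
          intro u hu
          have := List.sizeOf_lt_of_mem hu
          simp only [PTree.node.sizeOf_spec] at hs
          omega
        cases h with
        | cons _ _ _ bb _ h0 hts =>
          have h1 := IH (sizeOf t0) (hsz t0 (by simp)) t0 _ _ le_rfl h0
          have h2 := hforest ts (fun v hv => hsz v (by simp [hv])) _ _ hts
          omega

lemma wf_lt {t : PTree} {a b : ℕ} (h : PTree.WF t a b) : a < b :=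
  wf_lt_aux (sizeOf t) t a b le_rfl h

lemma wfs_le : ∀ {cs : List PTree} {a c : ℕ}, PTree.WFs cs a c → a ≤ c := by
  intro cs
  induction cs with
  | nil => intro a c h; cases h; omega
  | cons u us ihu =>
    intro a c h
    cases h with
    | cons _ _ _ b _ hu hus =>
      have h1 : a < b := wf_lt hu
      have h2 : b ≤ c := ihu hus
      omega

end WFfacts

section Main
variable {α : Type*} [DecidableEq α]

lemma matched_of (X Y : List α) (k lo hi a' b' : ℕ) (hlo : lo < hi) (hhi : hi ≤ X.length)
    (hb' : b' ≤ Y.length) (heq : strSlice X lo hi = strSlice Y a' b')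
    (hs : ((a' : ℤ) - lo).natAbs ≤ k) : Matched X Y k lo hi := by
  have hlX : (strSlice X lo hi).length = hi - lo := strSlice_length X hhi
  have hlY : (strSlice Y a' b').length = b' - a' := strSlice_length Y hb'
  rw [heq] at hlX
  have hbb : b' = a' + (hi - lo) := by omega
  refine ⟨(a' : ℤ) - lo, by omega, by omega, ?_⟩
  have h1 : ((lo : ℤ) + ((a' : ℤ) - lo)).toNat = a' := by omega
  have h2 : ((hi : ℤ) + ((a' : ℤ) - lo)).toNat = b' := by omega
  simp only [strSliceZ, h1, h2]
  exact heq

/-- The inductive property for a single tree. -/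
def TreeP (X Y : List α) (k : ℕ) (t : PTree) : Prop :=
  ∀ a b a' b' m : ℕ, PTree.WF t a b → b ≤ X.length → a' ≤ Y.length → b' ≤ Y.length →
    ED (strSlice X a b) (strSlice Y a' b') ≤ m → ((a' : ℤ) - a).natAbs + m ≤ k →
    countUnmatched X Y k t ≤ m * (t.height + 1)

lemma forest_bound (X Y : List α) (k : ℕ) : ∀ (cs : List PTree),
    (∀ t ∈ cs, TreeP X Y k t) → ∀ (a c a' c' m : ℕ), PTree.WFs cs a c →
    c ≤ X.length → a' ≤ Y.length → c' ≤ Y.length →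
    ED (strSlice X a c) (strSlice Y a' c') ≤ m → ((a' : ℤ) - a).natAbs + m ≤ k →
    (cs.map (countUnmatched X Y k)).sum ≤ m * ((cs.map PTree.height).foldr max 0 + 1) := by
  intro cs
  induction cs with
  | nil => intros; simp
  | cons t ts ih =>
    intro hP a c a' c' m hwfs hc ha' hc' hED hk
    cases hwfs with
    | cons _ _ _ b _ hwt hwts =>
      have hab : a < b := wf_lt hwt
      have hbc : b ≤ c := wfs_le hwts
      have hsplit : strSlice X a c = strSlice X a b ++ strSlice X b c :=
        strSlice_append X (le_of_lt hab) hbc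
      obtain ⟨Y1, Y2, hY, hle⟩ := ED_split (strSlice X a b) (strSlice X b c) (strSlice Y a' c')
      rw [← hsplit] at hle
      set b' := a' + Y1.length with hb'def
      have hYlen : (strSlice Y a' c').length = c' - a' := strSlice_length Y hc'
      have hYlen2 : (strSlice Y a' c').length ≤ Y.length - a' := by
        simp only [strSlice, List.length_take, List.length_drop]
        omega
      have happlen := congrArg List.length hY
      simp only [List.length_append] at happlen
      have hY1len : Y1.length ≤ c' - a' := by omega
      have hb'Y : b' ≤ Y.length := by omega
      have hY1 : Y1 = strSlice Y a' b' := by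
        have h1 : Y1 = (strSlice Y a' c').take Y1.length := by rw [← hY, List.take_left]
        rw [h1]
        unfold strSlice
        rw [List.take_take]
        have hmin : min Y1.length (c' - a') = b' - a' := by omega
        rw [hmin]
      have hY2 : Y2 = strSlice Y b' c' := by
        have h1 : Y2 = (strSlice Y a' c').drop Y1.length := by rw [← hY, List.drop_left]
        rw [h1]
        unfold strSlice
        rw [List.drop_take, List.drop_drop]
        have e1 : c' - a' - Y1.length = c' - b' := by omega
        have e2 : a' + Y1.length = b' := by omega
        rw [e1, e2]
      set m1 := ED (strSlice X a b) Y1 with hm1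
      have hm1m : m1 ≤ m := by omega
      have hED2 : ED (strSlice X b c) (strSlice Y b' c') ≤ m - m1 := by rw [← hY2]; omega
      have hcount1 : countUnmatched X Y k t ≤ m1 * (t.height + 1) := by
        apply hP t (by simp) a b a' b' m1 hwt (le_trans hbc hc) ha' hb'Y
        · rw [← hY1]
        · omega
      have hXlen : (strSlice X a b).length = b - a := strSlice_length X (le_trans hbc hc)
      have hl1 := ED_len1 (strSlice X a b) Y1
      have hl2 := ED_len2 (strSlice X a b) Y1
      have hcount2 : (ts.map (countUnmatched X Y k)).sum ≤
          (m - m1) * ((ts.map PTree.height).foldr max 0 + 1) := by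
        apply ih (fun u hu => hP u (by simp [hu])) b c b' c' (m - m1) hwts hc hb'Y hc' hED2
        push_cast
        omega
      simp only [List.map_cons, List.sum_cons, List.foldr_cons]
      set H1 := t.height with hH1
      set H2 := (ts.map PTree.height).foldr max 0 with hH2
      have e1 : m1 * (H1 + 1) ≤ m1 * (max H1 H2 + 1) :=
        Nat.mul_le_mul_left _ (by omega)
      have e2 : (m - m1) * (H2 + 1) ≤ (m - m1) * (max H1 H2 + 1) :=
        Nat.mul_le_mul_left _ (by omega)
      have e3 : m1 * (max H1 H2 + 1) + (m - m1) * (max H1 H2 + 1) = m * (max H1 H2 + 1) := by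
        rw [← Nat.add_mul]
        congr 1
        omega
      omega

lemma tree_bound (X Y : List α) (k : ℕ) : ∀ (N : ℕ) (t : PTree), sizeOf t ≤ N →
    TreeP X Y k t := by
  classical
  intro N
  induction N using Nat.strong_induction_on with
  | _ N IH =>
    intro t hN
    cases t with
    | leaf i =>
      intro a b a' b' m hwf hb ha' hb' hED hk
      cases hwf
      by_cases hm : m = 0
      · subst hm
        have h0 : ED (strSlice X i (i + 1)) (strSlice Y a' b') = 0 :=
          le_antisymm hED (Nat.zero_le _)
        have heq := ED_eq_zero h0
        have hmatch : Matched X Y k i (i + 1) :=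
          matched_of X Y k i (i + 1) a' b' (by omega) hb hb' heq (by omega)
        simp [countUnmatched, hmatch]
      · have h1 : countUnmatched X Y k (.leaf i) ≤ 1 := by
          rw [countUnmatched]
          split <;> omega
        have h2 : (PTree.leaf i).height = 0 := by rw [PTree.height]
        have h3 : m * ((PTree.leaf i).height + 1) = m := by rw [h2]; ring
        omega
    | node lo hi cs =>
      intro a b a' b' m hwf hb ha' hb' hED hk
      cases hwf with
      | node _ _ _ hne hwfs =>
        have hmem : ∀ u ∈ cs, TreeP X Y k u := by
          intro u hu
          have hsz : sizeOf u < N := by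
            have := List.sizeOf_lt_of_mem hu
            simp only [PTree.node.sizeOf_spec] at hN
            omega
          exact IH (sizeOf u) hsz u le_rfl
        have hforest := forest_bound X Y k cs hmem lo hi a' b' m hwfs hb ha' hb' hED hk
        have hcountEq : countUnmatched X Y k (.node lo hi cs) =
            (if Matched X Y k lo hi then 0 else 1) + (cs.map (countUnmatched X Y k)).sum := by
          rw [countUnmatched, List.attach_map_val]
        have hheightEq : (PTree.node lo hi cs).height = (cs.map PTree.height).foldr max 0 + 1 := by
          rw [PTree.height, List.attach_map_val]
        by_cases hm : m = 0
        · subst hm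
          have h0 : ED (strSlice X lo hi) (strSlice Y a' b') = 0 :=
            le_antisymm hED (Nat.zero_le _)
          have heq := ED_eq_zero h0
          have hlohi : lo < hi := wf_lt (PTree.WF.node lo hi cs hne hwfs)
          have hmatch := matched_of X Y k lo hi a' b' hlohi hb hb' heq (by omega)
          rw [hcountEq, if_pos hmatch]
          simp only [Nat.zero_mul, Nat.zero_add] at hforest ⊢
          omega
        · rw [hcountEq, hheightEq]
          have h1 : (if Matched X Y k lo hi then 0 else 1) ≤ 1 := by split <;> omega
          set M := (cs.map PTree.height).foldr max 0 with hM
          have h2 : m * (M + 1 + 1) = m * (M + 1) + m := by ring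
          omega

end Main

/-- If a partition tree for equal length-`n` strings `X, Y` has depth (number of levels)
at most `D` and `ED(X, Y) ≤ k`, then at most `k·D` of its nodes are unmatched. -/
theorem unmatched_le {α : Type*} [DecidableEq α] (X Y : List α) (n k D : ℕ) (t : PTree)
    (hX : X.length = n) (hY : Y.length = n) (hwf : PTree.WF t 0 n)
    (hED : ED X Y ≤ k) (hD : PTree.height t + 1 ≤ D) :
    countUnmatched X Y k t ≤ k * D := by
  have hX0 : strSlice X 0 n = X := by
    simp only [strSlice, Nat.sub_zero, List.drop_zero]
    rw [← hX, List.take_length]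
  have hY0 : strSlice Y 0 n = Y := by
    simp only [strSlice, Nat.sub_zero, List.drop_zero]
    rw [← hY, List.take_length]
  have h := tree_bound X Y k (sizeOf t) t le_rfl 0 n 0 n k hwf (by omega) (by omega) (by omega)
    (by rw [hX0, hY0]; exact hED) (by simp)
  exact le_trans h (Nat.mul_le_mul_left k hD)
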